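/- Fix Lv ∈ ℝ^{m2×n}; set A_k = A + B2 Lv and Q_k = Q − γ² LvᵀLv; for symmetric P with S(P) invertible set A(P) = A_k + B1 K(P) and C(P) = C + D K(P). Assume P* is a symmetric solution of the inner GARE at Lv with S(P*) invertible and (K(P*), Lv) stabilizing; let δ₀ > 0 be such that for every symmetric P with ‖P − P*‖_F < δ₀, S(P) is invertible and (K(P), Lv) is stabilizing; and let d > 0 be such that for all symmetric P̂ with ‖P̂ − P*‖_F < δ₀ and all symmetric ΔM with ‖ΔM‖_F ≤ d, the block [M(P̂)+ΔM]_{uu} is invertible and ( −[M(P̂)+ΔM]_{uu}⁻¹[M(P̂)+ΔM]_{ux} , Lv ) is stabilizing. Then there exists c₃ > 0 (depending only on δ₀ and the data) such that for every c₂ > 0 there exists δ ∈ (0, d], independent of P̂, with the following property: for all symmetric P̂ with ‖P̂ − P*‖_F < δ₀ and all symmetric ΔM with ‖ΔM‖_F < δ, writing L̂ = −[M(P̂)+ΔM]_{uu}⁻¹[M(P̂)+ΔM]_{ux}, the unique symmetric solutions Π₁ of 𝓛_{A_k+B1 L̂, C+D L̂}(Π₁) = −Q_k − L̂ᵀRL̂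 and Π₂ of 𝓛_{A(P̂),C(P̂)}(Π₂) = −Q_k − N(P̂)ᵀS(P̂)⁻¹RS(P̂)⁻¹N(P̂) satisfy ‖Π₁ − Π₂‖_F ≤ c₃ ‖ΔM‖_F < c₂. -/

import Mathlib

open Matrix Filter
open scoped Kronecker

noncomputable section

/-- Frobenius norm of a real matrix. -/
def frobNorm {I J : Type*} [Fintype I] [Fintype J] (M : Matrix I J ℝ) : ℝ :=
  Real.sqrt (∑ i, ∑ j, (M i j) ^ 2)

/-- Spectral norm (induced 2-norm) of a real matrix. -/
def specNorm {I J : Type*} [Fintype I] [Fintype J] [DecidableEq J] (M : Matrix I J ℝ) : ℝ :=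
  @norm _ (Matrix.instL2OpNormedAddCommGroup (m := I) (n := J) (𝕜 := ℝ)).toNorm M

/-- Every complex eigenvalue of `Iₙ ⊗ Xᵀ + Xᵀ ⊗ Iₙ + Zᵀ ⊗ Zᵀ` has negative real part. -/
def HurwitzKron {n : ℕ} (X Z : Matrix (Fin n) (Fin n) ℝ) : Prop :=
  ∀ μ ∈ spectrum ℂ
      (((1 : Matrix (Fin n) (Fin n) ℝ) ⊗ₖ Xᵀ + Xᵀ ⊗ₖ (1 : Matrix (Fin n) (Fin n) ℝ)
          + Zᵀ ⊗ₖ Zᵀ).map (Complex.ofReal ·)),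
    μ.re < 0

/-- The generalized Lyapunov operator `𝓛_{X,Z}(Y) = XᵀY + YX + ZᵀYZ`. -/
def lyapOp {n : ℕ} (X Z Y : Matrix (Fin n) (Fin n) ℝ) : Matrix (Fin n) (Fin n) ℝ :=
  Xᵀ * Y + Y * X + Zᵀ * Y * Z

/-- A gain pair `(Lu, Lv)` is stabilizing (mean-square stability of the closed loop). -/
def Stabilizing {n m1 m2 : ℕ} (A C : Matrix (Fin n) (Fin n) ℝ)
    (B1 D : Matrix (Fin n) (Fin m1) ℝ) (B2 : Matrix (Fin n) (Fin m2) ℝ)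
    (Lu : Matrix (Fin m1) (Fin n) ℝ) (Lv : Matrix (Fin m2) (Fin n) ℝ) : Prop :=
  HurwitzKron (A + B1 * Lu + B2 * Lv) (C + D * Lu)

/-- `N(P) = B1ᵀP + DᵀPC`. -/
def Nmat {n m1 : ℕ} (C : Matrix (Fin n) (Fin n) ℝ) (B1 D : Matrix (Fin n) (Fin m1) ℝ)
    (P : Matrix (Fin n) (Fin n) ℝ) : Matrix (Fin m1) (Fin n) ℝ :=
  B1ᵀ * P + Dᵀ * P * C

/-- `S(P) = R + DᵀPD`. -/
def Smat {n m1 : ℕ} (R : Matrix (Fin m1) (Fin m1) ℝ) (D : Matrix (Fin n) (Fin m1) ℝ)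
    (P : Matrix (Fin n) (Fin n) ℝ) : Matrix (Fin m1) (Fin m1) ℝ :=
  R + Dᵀ * P * D

/-- `K(P) = −S(P)⁻¹ N(P)`. -/
def Kgain {n m1 : ℕ} (C : Matrix (Fin n) (Fin n) ℝ) (B1 D : Matrix (Fin n) (Fin m1) ℝ)
    (R : Matrix (Fin m1) (Fin m1) ℝ) (P : Matrix (Fin n) (Fin n) ℝ) :
    Matrix (Fin m1) (Fin n) ℝ :=
  -((Smat R D P)⁻¹ * Nmat C B1 D P)

/-- The symmetric block matrix `M(P)` of the paper. -/
def Mblk {n m1 m2 : ℕ} (A C Q : Matrix (Fin n) (Fin n) ℝ)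
    (B1 D : Matrix (Fin n) (Fin m1) ℝ) (B2 : Matrix (Fin n) (Fin m2) ℝ)
    (R : Matrix (Fin m1) (Fin m1) ℝ) (γ : ℝ) (P : Matrix (Fin n) (Fin n) ℝ) :
    Matrix (Fin n ⊕ Fin m1 ⊕ Fin m2) (Fin n ⊕ Fin m1 ⊕ Fin m2) ℝ :=
  Matrix.of fun i j =>
    match i, j with
    | Sum.inl i, Sum.inl j => (Q + Aᵀ * P + P * A + Cᵀ * P * C) i j
    | Sum.inl i, Sum.inr (Sum.inl j) => (Nmat C B1 D P)ᵀ i j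
    | Sum.inl i, Sum.inr (Sum.inr j) => (B2ᵀ * P)ᵀ i j
    | Sum.inr (Sum.inl i), Sum.inl j => (Nmat C B1 D P) i j
    | Sum.inr (Sum.inl i), Sum.inr (Sum.inl j) => (Smat R D P) i j
    | Sum.inr (Sum.inl _), Sum.inr (Sum.inr _) => 0
    | Sum.inr (Sum.inr i), Sum.inl j => (B2ᵀ * P) i j
    | Sum.inr (Sum.inr _), Sum.inr (Sum.inl _) => 0
    | Sum.inr (Sum.inr i), Sum.inr (Sum.inr j) =>
        ((-γ ^ 2) • (1 : Matrix (Fin m2) (Fin m2) ℝ)) i j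

/-- The `uu` block of an `(n+m1+m2)×(n+m1+m2)` matrix. -/
def blkUU {n m1 m2 : ℕ}
    (M : Matrix (Fin n ⊕ Fin m1 ⊕ Fin m2) (Fin n ⊕ Fin m1 ⊕ Fin m2) ℝ) :
    Matrix (Fin m1) (Fin m1) ℝ :=
  Matrix.of fun i j => M (Sum.inr (Sum.inl i)) (Sum.inr (Sum.inl j))

/-- The `ux` block of an `(n+m1+m2)×(n+m1+m2)` matrix. -/
def blkUX {n m1 m2 : ℕ}
    (M : Matrix (Fin n ⊕ Fin m1 ⊕ Fin m2) (Fin n ⊕ Fin m1 ⊕ Fin m2) ℝ) :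
    Matrix (Fin m1) (Fin n) ℝ :=
  Matrix.of fun i j => M (Sum.inr (Sum.inl i)) (Sum.inl j)

/-- The inner GARE at the gain `Lv`:
`(A+B2 Lv)ᵀP + P(A+B2 Lv) + CᵀPC + Q − γ² LvᵀLv − N(P)ᵀS(P)⁻¹N(P) = 0`. -/
def InnerGARE {n m1 m2 : ℕ} (A C Q : Matrix (Fin n) (Fin n) ℝ)
    (B1 D : Matrix (Fin n) (Fin m1) ℝ) (B2 : Matrix (Fin n) (Fin m2) ℝ)
    (R : Matrix (Fin m1) (Fin m1) ℝ) (γ : ℝ) (Lv : Matrix (Fin m2) (Fin n) ℝ)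
    (P : Matrix (Fin n) (Fin n) ℝ) : Prop :=
  (A + B2 * Lv)ᵀ * P + P * (A + B2 * Lv) + Cᵀ * P * C + Q - (γ ^ 2) • (Lvᵀ * Lv)
    - (Nmat C B1 D P)ᵀ * (Smat R D P)⁻¹ * Nmat C B1 D P = 0

/-- The full game algebraic Riccati equation. -/
def FullGARE {n m1 m2 : ℕ} (A C Q : Matrix (Fin n) (Fin n) ℝ)
    (B1 D : Matrix (Fin n) (Fin m1) ℝ) (B2 : Matrix (Fin n) (Fin m2) ℝ)
    (R : Matrix (Fin m1) (Fin m1) ℝ) (γ : ℝ) (P : Matrix (Fin n) (Fin n) ℝ) : Prop :=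
  Aᵀ * P + P * A + Cᵀ * P * C + (γ ^ 2)⁻¹ • (P * B2 * B2ᵀ * P)
    - (Nmat C B1 D P)ᵀ * (Smat R D P)⁻¹ * Nmat C B1 D P + Q = 0

/-- An outer iterate at `Lv`: a symmetric solution of the inner GARE at `Lv` with `S(P)`
invertible and `(K(P), Lv)` stabilizing. -/
def OuterIterate {n m1 m2 : ℕ} (A C Q : Matrix (Fin n) (Fin n) ℝ)
    (B1 D : Matrix (Fin n) (Fin m1) ℝ) (B2 : Matrix (Fin n) (Fin m2) ℝ)
    (R : Matrix (Fin m1) (Fin m1) ℝ) (γ : ℝ) (Lv : Matrix (Fin m2) (Fin n) ℝ)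
    (P : Matrix (Fin n) (Fin n) ℝ) : Prop :=
  P.IsSymm ∧ IsUnit (Smat R D P).det ∧ InnerGARE A C Q B1 D B2 R γ Lv P ∧
    Stabilizing A C B1 D B2 (Kgain C B1 D R P) Lv

/-- `P_v*` is a stabilizing solution of the full GARE. -/
def StabilizingSolution {n m1 m2 : ℕ} (A C Q : Matrix (Fin n) (Fin n) ℝ)
    (B1 D : Matrix (Fin n) (Fin m1) ℝ) (B2 : Matrix (Fin n) (Fin m2) ℝ)
    (R : Matrix (Fin m1) (Fin m1) ℝ) (γ : ℝ) (P : Matrix (Fin n) (Fin n) ℝ) : Prop :=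
  P.IsSymm ∧ IsUnit (Smat R D P).det ∧ FullGARE A C Q B1 D B2 R γ P ∧
    Stabilizing A C B1 D B2 (Kgain C B1 D R P) ((γ ^ 2)⁻¹ • (B2ᵀ * P))

/-! ## Auxiliary toolkit -/

namespace EvalAux

attribute [local instance] Matrix.normedAddCommGroup Matrix.normedSpace

/-- vectorization of a square matrix. -/
def vecM {n : ℕ} (Y : Matrix (Fin n) (Fin n) ℝ) : (Fin n × Fin n) → ℝ := fun p => Y p.2 p.1

/-- the Kronecker matrix of the generalized Lyapunov operator. -/
def kronMat {n : ℕ} (X Z : Matrix (Fin n) (Fin n) ℝ) :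
    Matrix (Fin n × Fin n) (Fin n × Fin n) ℝ :=
  (1 : Matrix (Fin n) (Fin n) ℝ) ⊗ₖ Xᵀ + Xᵀ ⊗ₖ (1 : Matrix (Fin n) (Fin n) ℝ) + Zᵀ ⊗ₖ Zᵀ

lemma kronMat_mulVec {n : ℕ} (X Z Y : Matrix (Fin n) (Fin n) ℝ) :
    kronMat X Z *ᵥ vecM Y = vecM (lyapOp X Z Y) := by
  funext p
  obtain ⟨i₁, i₂⟩ := p
  simp only [kronMat, vecM, lyapOp, Matrix.mulVec, dotProduct, Matrix.add_apply,
    Matrix.kroneckerMap_apply, Matrix.one_apply, Matrix.mul_apply, Fintype.sum_prod_type,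
    Matrix.transpose_apply]
  simp only [add_mul, Finset.sum_add_distrib, ite_mul, one_mul, zero_mul, mul_ite, mul_zero,
    mul_one, Finset.sum_ite_eq, Finset.sum_ite_eq', Finset.mem_univ, if_true]
  congr 1
  · congr 1
    · rw [Finset.sum_comm]
      simp [mul_comm]
    · simp [mul_comm]
  · congr 1; funext j
    rw [Finset.sum_mul]
    exact Finset.sum_congr rfl fun k _ => by ring

lemma isUnit_kronMat_det {n : ℕ} {X Z : Matrix (Fin n) (Fin n) ℝ} (h : HurwitzKron X Z) :
    IsUnit (kronMat X Z).det := by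
  rw [isUnit_iff_ne_zero]
  intro hdet
  have hmap : ((kronMat X Z).map (Complex.ofReal ·)).det = 0 := by
    rw [show ((kronMat X Z).map (Complex.ofReal ·))
        = Complex.ofRealHom.mapMatrix (kronMat X Z) from rfl, ← RingHom.map_det, hdet]
    simp
  have h0 : (0 : ℂ) ∈ spectrum ℂ
      (((1 : Matrix (Fin n) (Fin n) ℝ) ⊗ₖ Xᵀ + Xᵀ ⊗ₖ (1 : Matrix (Fin n) (Fin n) ℝ)
          + Zᵀ ⊗ₖ Zᵀ).map (Complex.ofReal ·)) := by
    rw [spectrum.zero_mem_iff, Matrix.isUnit_iff_isUnit_det]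
    simp [kronMat] at hmap
    simp [hmap]
  have := h 0 h0
  simp at this

lemma vec_sol {n : ℕ} {X Z Y W : Matrix (Fin n) (Fin n) ℝ} (h : IsUnit (kronMat X Z).det)
    (heq : lyapOp X Z Y = W) : vecM Y = (kronMat X Z)⁻¹ *ᵥ vecM W := by
  rw [← heq, ← kronMat_mulVec, Matrix.mulVec_mulVec, Matrix.nonsing_inv_mul _ h,
    Matrix.one_mulVec]

section Norms

variable {I J K' : Type*} [Fintype I] [Fintype J] [Fintype K']

lemma entry_abs_le (M : Matrix I J ℝ) (i : I) (j : J) : |M i j| ≤ ‖M‖ := by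
  simpa using Matrix.norm_entry_le_entrywise_sup_norm M (i := i) (j := j)

lemma norm_matrix_le {M : Matrix I J ℝ} {c : ℝ} (hc : 0 ≤ c)
    (h : ∀ i j, |M i j| ≤ c) : ‖M‖ ≤ c := (Matrix.norm_le_iff hc).2 (by simpa using h)

lemma norm_mul_le' (M : Matrix I J ℝ) (N : Matrix J K' ℝ) :
    ‖M * N‖ ≤ (Fintype.card J) * ‖M‖ * ‖N‖ := by
  apply norm_matrix_le (by positivity)
  intro i k
  calc |(M * N) i k| ≤ ∑ j, |M i j * N j k| := by
        rw [Matrix.mul_apply]; exact Finset.abs_sum_le_sum_abs _ _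
    _ ≤ ∑ _j : J, ‖M‖ * ‖N‖ := Finset.sum_le_sum fun j _ => by
        rw [abs_mul]
        exact mul_le_mul (entry_abs_le M i j) (entry_abs_le N j k) (abs_nonneg _) (norm_nonneg _)
    _ = (Fintype.card J) * ‖M‖ * ‖N‖ := by
        rw [Finset.sum_const, Finset.card_univ, nsmul_eq_mul, mul_assoc]

lemma norm_mul_fin {m : ℕ} (M : Matrix I (Fin m) ℝ) (N : Matrix (Fin m) K' ℝ) :
    ‖M * N‖ ≤ (m:ℝ) * ‖M‖ * ‖N‖ := by
  simpa [Fintype.card_fin] using norm_mul_le' M N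

lemma norm_mulVec_le (M : Matrix I J ℝ) (v : J → ℝ) :
    ‖M *ᵥ v‖ ≤ (Fintype.card J) * ‖M‖ * ‖v‖ := by
  rw [pi_norm_le_iff_of_nonneg (by positivity)]
  intro i
  calc ‖(M *ᵥ v) i‖ ≤ ∑ j, |M i j * v j| := by
        simp only [Matrix.mulVec, dotProduct, Real.norm_eq_abs]
        exact Finset.abs_sum_le_sum_abs _ _
    _ ≤ ∑ _j : J, ‖M‖ * ‖v‖ := Finset.sum_le_sum fun j _ => by
        rw [abs_mul]
        exact mul_le_mul (entry_abs_le M i j) (norm_le_pi_norm v j) (abs_nonneg _) (norm_nonneg _)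
    _ = (Fintype.card J) * ‖M‖ * ‖v‖ := by
        rw [Finset.sum_const, Finset.card_univ, nsmul_eq_mul, mul_assoc]

lemma norm_vecM {n : ℕ} (Y : Matrix (Fin n) (Fin n) ℝ) : ‖vecM Y‖ = ‖Y‖ := by
  apply le_antisymm
  · rw [pi_norm_le_iff_of_nonneg (norm_nonneg _)]
    exact fun p => entry_abs_le Y p.2 p.1
  · exact norm_matrix_le (norm_nonneg _) fun i j => norm_le_pi_norm (vecM Y) (j, i)

lemma frobNorm_nonneg (M : Matrix I J ℝ) : 0 ≤ frobNorm M := Real.sqrt_nonneg _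

lemma norm_le_frobNorm (M : Matrix I J ℝ) : ‖M‖ ≤ frobNorm M := by
  apply norm_matrix_le (frobNorm_nonneg M)
  intro i j
  rw [← Real.sqrt_sq_eq_abs]
  apply Real.sqrt_le_sqrt
  calc (M i j) ^ 2 ≤ ∑ j', (M i j') ^ 2 :=
        Finset.single_le_sum (f := fun j' => (M i j') ^ 2)
          (fun _ _ => sq_nonneg _) (Finset.mem_univ j)
    _ ≤ ∑ i', ∑ j', (M i' j') ^ 2 :=
        Finset.single_le_sum (f := fun i' => ∑ j', (M i' j') ^ 2)
          (fun _ _ => Finset.sum_nonneg fun _ _ => sq_nonneg _) (Finset.mem_univ i)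

lemma frobNorm_le_card_norm (M : Matrix I J ℝ) :
    frobNorm M ≤ (Fintype.card I * Fintype.card J) * ‖M‖ := by
  have h1 : frobNorm M ≤ Real.sqrt (((Fintype.card I * Fintype.card J) * ‖M‖) ^ 2) := by
    apply Real.sqrt_le_sqrt
    calc ∑ i, ∑ j, (M i j) ^ 2 ≤ ∑ _i : I, ∑ _j : J, ‖M‖ ^ 2 := by
          refine Finset.sum_le_sum fun i _ => Finset.sum_le_sum fun j _ => ?_
          calc (M i j) ^ 2 = |M i j| ^ 2 := (sq_abs _).symm
            _ ≤ ‖M‖ ^ 2 := pow_le_pow_left₀ (abs_nonneg _) (entry_abs_le M i j) 2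
      _ = (Fintype.card I * Fintype.card J) * ‖M‖ ^ 2 := by
          simp [Finset.sum_const, Finset.card_univ]; ring
      _ ≤ ((Fintype.card I * Fintype.card J) * ‖M‖) ^ 2 := by
          have hk : ((Fintype.card I * Fintype.card J : ℕ) : ℝ)
              ≤ ((Fintype.card I * Fintype.card J : ℕ) : ℝ) ^ 2 := by
            exact_mod_cast Nat.le_self_pow two_ne_zero _
          push_cast at hk ⊢
          nlinarith [mul_nonneg (sub_nonneg.2 hk) (sq_nonneg ‖M‖)]
  rwa [Real.sqrt_sq (by positivity)] at h1

lemma frobNorm_smul {n : ℕ} (c : ℝ) (M : Matrix (Fin n) (Fin n) ℝ) :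
    frobNorm (c • M) = |c| * frobNorm M := by
  unfold frobNorm
  rw [← Real.sqrt_sq_eq_abs, ← Real.sqrt_mul (sq_nonneg c)]
  congr 1
  simp [Finset.mul_sum, mul_pow]

lemma continuous_frobNorm : Continuous fun M : Matrix I J ℝ => frobNorm M := by
  apply Real.continuous_sqrt.comp
  apply continuous_finset_sum
  intro i _
  apply continuous_finset_sum
  intro j _
  exact ((continuous_apply j).comp (continuous_apply i)).pow 2

end Norms

end EvalAux
namespace EvalAux

attribute [local instance] Matrix.normedAddCommGroup Matrix.normedSpace

section Blocks

variable {n m1 m2 : ℕ}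
variable (A C Q : Matrix (Fin n) (Fin n) ℝ) (B1 D : Matrix (Fin n) (Fin m1) ℝ)
  (B2 : Matrix (Fin n) (Fin m2) ℝ) (R : Matrix (Fin m1) (Fin m1) ℝ) (γ : ℝ)

lemma blkUU_add (M M' : Matrix (Fin n ⊕ Fin m1 ⊕ Fin m2) (Fin n ⊕ Fin m1 ⊕ Fin m2) ℝ) :
    blkUU (M + M') = blkUU M + blkUU M' := rfl

lemma blkUX_add (M M' : Matrix (Fin n ⊕ Fin m1 ⊕ Fin m2) (Fin n ⊕ Fin m1 ⊕ Fin m2) ℝ) :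
    blkUX (M + M') = blkUX M + blkUX M' := rfl

lemma blkUU_Mblk (P : Matrix (Fin n) (Fin n) ℝ) :
    blkUU (Mblk A C Q B1 D B2 R γ P) = Smat R D P := rfl

lemma blkUX_Mblk (P : Matrix (Fin n) (Fin n) ℝ) :
    blkUX (Mblk A C Q B1 D B2 R γ P) = Nmat C B1 D P := rfl

lemma norm_blkUU_le (M : Matrix (Fin n ⊕ Fin m1 ⊕ Fin m2) (Fin n ⊕ Fin m1 ⊕ Fin m2) ℝ) :
    ‖blkUU M‖ ≤ ‖M‖ :=
  norm_matrix_le (norm_nonneg _) fun i j => entry_abs_le M _ _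

lemma norm_blkUX_le (M : Matrix (Fin n ⊕ Fin m1 ⊕ Fin m2) (Fin n ⊕ Fin m1 ⊕ Fin m2) ℝ) :
    ‖blkUX M‖ ≤ ‖M‖ :=
  norm_matrix_le (norm_nonneg _) fun i j => entry_abs_le M _ _

lemma Mblk_isSymm (hQ : Q.IsSymm) (hR : R.IsSymm) {P : Matrix (Fin n) (Fin n) ℝ}
    (hP : P.IsSymm) : (Mblk A C Q B1 D B2 R γ P).IsSymm := by
  have hxx : (Q + Aᵀ * P + P * A + Cᵀ * P * C).IsSymm := by
    unfold Matrix.IsSymm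
    simp only [Matrix.transpose_add, Matrix.transpose_mul, Matrix.transpose_transpose,
      hP.eq, hQ.eq, ← Matrix.mul_assoc]
    abel
  have hS : (Smat R D P).IsSymm := by
    unfold Matrix.IsSymm Smat
    simp only [Matrix.transpose_add, Matrix.transpose_mul, Matrix.transpose_transpose,
      hP.eq, hR.eq, ← Matrix.mul_assoc]
  unfold Matrix.IsSymm
  ext i j
  rcases i with i | i | i <;> rcases j with j | j | j <;>
    simp only [Matrix.transpose_apply, Mblk, Matrix.of_apply]
  · exact hxx.apply i j
  · exact hS.apply i j
  · exact ((Matrix.isSymm_one (α := ℝ) (n := Fin m2)).smul (-γ^2)).apply i j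

lemma continuous_Mblk : Continuous fun P : Matrix (Fin n) (Fin n) ℝ =>
    Mblk A C Q B1 D B2 R γ P := by
  have hid : Continuous fun P : Matrix (Fin n) (Fin n) ℝ => P := continuous_id
  have hxx : Continuous fun P : Matrix (Fin n) (Fin n) ℝ =>
      Q + Aᵀ * P + P * A + Cᵀ * P * C :=
    ((continuous_const.add (continuous_const.matrix_mul hid)).add
      (hid.matrix_mul continuous_const)).add
      ((continuous_const.matrix_mul hid).matrix_mul continuous_const)
  have hN : Continuous fun P : Matrix (Fin n) (Fin n) ℝ => Nmat C B1 D P := by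
    unfold Nmat
    exact (continuous_const.matrix_mul hid).add
      ((continuous_const.matrix_mul hid).matrix_mul continuous_const)
  have hS : Continuous fun P : Matrix (Fin n) (Fin n) ℝ => Smat R D P := by
    unfold Smat
    exact continuous_const.add ((continuous_const.matrix_mul hid).matrix_mul continuous_const)
  have hB2 : Continuous fun P : Matrix (Fin n) (Fin n) ℝ => B2ᵀ * P :=
    continuous_const.matrix_mul hid
  apply continuous_matrix
  intro i j
  rcases i with i | i | i <;> rcases j with j | j | j <;>
    simp only [Mblk, Matrix.of_apply]
  · exact hxx.matrix_elem _ _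
  · exact hN.matrix_transpose.matrix_elem _ _
  · exact hB2.matrix_transpose.matrix_elem _ _
  · exact hN.matrix_elem _ _
  · exact hS.matrix_elem _ _
  · exact continuous_const
  · exact hB2.matrix_elem _ _
  · exact continuous_const
  · exact continuous_const

end Blocks

end EvalAux
namespace EvalAux

attribute [local instance] Matrix.normedAddCommGroup Matrix.normedSpace

section Setup

variable {n m1 m2 : ℕ}
variable (A C Q : Matrix (Fin n) (Fin n) ℝ) (B1 D : Matrix (Fin n) (Fin m1) ℝ)
  (B2 : Matrix (Fin n) (Fin m2) ℝ) (R : Matrix (Fin m1) (Fin m1) ℝ) (γ : ℝ)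
  (Lv : Matrix (Fin m2) (Fin n) ℝ)

/-- the perturbed `uu` block. -/
def SUf (P : Matrix (Fin n) (Fin n) ℝ)
    (Δ : Matrix (Fin n ⊕ Fin m1 ⊕ Fin m2) (Fin n ⊕ Fin m1 ⊕ Fin m2) ℝ) :
    Matrix (Fin m1) (Fin m1) ℝ :=
  blkUU (Mblk A C Q B1 D B2 R γ P + Δ)

/-- the perturbed `ux` block. -/
def UXf (P : Matrix (Fin n) (Fin n) ℝ)
    (Δ : Matrix (Fin n ⊕ Fin m1 ⊕ Fin m2) (Fin n ⊕ Fin m1 ⊕ Fin m2) ℝ) :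
    Matrix (Fin m1) (Fin n) ℝ :=
  blkUX (Mblk A C Q B1 D B2 R γ P + Δ)

/-- the perturbed gain. -/
def Lh (P : Matrix (Fin n) (Fin n) ℝ)
    (Δ : Matrix (Fin n ⊕ Fin m1 ⊕ Fin m2) (Fin n ⊕ Fin m1 ⊕ Fin m2) ℝ) :
    Matrix (Fin m1) (Fin n) ℝ :=
  -((SUf A C Q B1 D B2 R γ P Δ)⁻¹ * UXf A C Q B1 D B2 R γ P Δ)

lemma SUf_eq (P Δ) : SUf A C Q B1 D B2 R γ P Δ = Smat R D P + blkUU Δ := by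
  unfold SUf; rw [blkUU_add, blkUU_Mblk]

lemma UXf_eq (P Δ) : UXf A C Q B1 D B2 R γ P Δ = Nmat C B1 D P + blkUX Δ := by
  unfold UXf; rw [blkUX_add, blkUX_Mblk]

lemma SUf_zero (P) : SUf A C Q B1 D B2 R γ P 0 = Smat R D P := by
  unfold SUf; rw [add_zero, blkUU_Mblk]

lemma UXf_zero (P) : UXf A C Q B1 D B2 R γ P 0 = Nmat C B1 D P := by
  unfold UXf; rw [add_zero, blkUX_Mblk]

lemma Lh_zero (P) : Lh A C Q B1 D B2 R γ P 0 = Kgain C B1 D R P := by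
  unfold Lh Kgain; rw [SUf_zero, UXf_zero]

/-- the compact parameter set. -/
def Kset (Pstar : Matrix (Fin n) (Fin n) ℝ) (δ₀ d : ℝ) :
    Set (Matrix (Fin n) (Fin n) ℝ
      × Matrix (Fin n ⊕ Fin m1 ⊕ Fin m2) (Fin n ⊕ Fin m1 ⊕ Fin m2) ℝ) :=
  {p | p.1.IsSymm ∧ frobNorm (p.1 - Pstar) ≤ δ₀ ∧ p.2.IsSymm ∧ frobNorm p.2 ≤ d / 2}

lemma isCompact_Kset (Pstar : Matrix (Fin n) (Fin n) ℝ) (δ₀ d : ℝ) :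
    IsCompact (Kset (n := n) (m1 := m1) (m2 := m2) Pstar δ₀ d) := by
  apply Metric.isCompact_of_isClosed_isBounded
  · have h1 : IsClosed {p : Matrix (Fin n) (Fin n) ℝ
        × Matrix (Fin n ⊕ Fin m1 ⊕ Fin m2) (Fin n ⊕ Fin m1 ⊕ Fin m2) ℝ | p.1ᵀ = p.1} :=
      isClosed_eq continuous_fst.matrix_transpose continuous_fst
    have h2 : IsClosed {p : Matrix (Fin n) (Fin n) ℝ
        × Matrix (Fin n ⊕ Fin m1 ⊕ Fin m2) (Fin n ⊕ Fin m1 ⊕ Fin m2) ℝ |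
          frobNorm (p.1 - Pstar) ≤ δ₀} :=
      isClosed_le (continuous_frobNorm.comp (continuous_fst.sub continuous_const))
        continuous_const
    have h3 : IsClosed {p : Matrix (Fin n) (Fin n) ℝ
        × Matrix (Fin n ⊕ Fin m1 ⊕ Fin m2) (Fin n ⊕ Fin m1 ⊕ Fin m2) ℝ | p.2ᵀ = p.2} :=
      isClosed_eq continuous_snd.matrix_transpose continuous_snd
    have h4 : IsClosed {p : Matrix (Fin n) (Fin n) ℝ
        × Matrix (Fin n ⊕ Fin m1 ⊕ Fin m2) (Fin n ⊕ Fin m1 ⊕ Fin m2) ℝ |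
          frobNorm p.2 ≤ d / 2} :=
      isClosed_le (continuous_frobNorm.comp continuous_snd) continuous_const
    exact h1.inter (h2.inter (h3.inter h4))
  · apply (Metric.isBounded_closedBall (x := (0 : Matrix (Fin n) (Fin n) ℝ
      × Matrix (Fin n ⊕ Fin m1 ⊕ Fin m2) (Fin n ⊕ Fin m1 ⊕ Fin m2) ℝ))
      (r := max (‖Pstar‖ + δ₀) (d / 2))).subset
    rintro ⟨P, Δ⟩ ⟨-, h2, -, h4⟩
    rw [Metric.mem_closedBall, dist_zero_right, Prod.norm_def]
    apply max_le_max
    · calc ‖P‖ ≤ ‖P - Pstar‖ + ‖Pstar‖ := by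
            simpa using norm_add_le (P - Pstar) Pstar
        _ ≤ ‖Pstar‖ + δ₀ := by
            have := (norm_le_frobNorm (P - Pstar)).trans h2
            linarith
    · exact (norm_le_frobNorm Δ).trans h4

end Setup

end EvalAux
namespace EvalAux

attribute [local instance] Matrix.normedAddCommGroup Matrix.normedSpace

section GoodSet

variable {n m1 m2 : ℕ}
variable (A C Q : Matrix (Fin n) (Fin n) ℝ) (B1 D : Matrix (Fin n) (Fin m1) ℝ)
  (B2 : Matrix (Fin n) (Fin m2) ℝ) (R : Matrix (Fin m1) (Fin m1) ℝ) (γ : ℝ)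
  (Lv : Matrix (Fin m2) (Fin n) ℝ)

lemma good_set (hQ : Q.IsSymm) (hR : R.IsSymm) (Pstar : Matrix (Fin n) (Fin n) ℝ)
    (hPstarSym : Pstar.IsSymm) (δ₀ d : ℝ) (hδ₀pos : 0 < δ₀) (hdpos : 0 < d)
    (hd : ∀ Phat : Matrix (Fin n) (Fin n) ℝ, Phat.IsSymm → frobNorm (Phat - Pstar) < δ₀ →
      ∀ ΔM : Matrix (Fin n ⊕ Fin m1 ⊕ Fin m2) (Fin n ⊕ Fin m1 ⊕ Fin m2) ℝ,
        ΔM.IsSymm → frobNorm ΔM ≤ d →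
        IsUnit (blkUU (Mblk A C Q B1 D B2 R γ Phat + ΔM)).det ∧
        Stabilizing A C B1 D B2
          (-((blkUU (Mblk A C Q B1 D B2 R γ Phat + ΔM))⁻¹
              * blkUX (Mblk A C Q B1 D B2 R γ Phat + ΔM))) Lv)
    {P : Matrix (Fin n) (Fin n) ℝ}
    {Δ : Matrix (Fin n ⊕ Fin m1 ⊕ Fin m2) (Fin n ⊕ Fin m1 ⊕ Fin m2) ℝ}
    (hmem : (P, Δ) ∈ Kset (m1 := m1) (m2 := m2) Pstar δ₀ d) :
    IsUnit (SUf A C Q B1 D B2 R γ P Δ).det ∧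
      Stabilizing A C B1 D B2 (Lh A C Q B1 D B2 R γ P Δ) Lv := by
  obtain ⟨hPsym, hPball, hΔsym, hΔball⟩ := hmem
  -- interpolation parameter
  set g : ℝ → Matrix (Fin n) (Fin n) ℝ := fun t => Pstar + t • (P - Pstar) with hg
  have hg1 : g 1 = P := by simp [hg]
  set f : ℝ → ℝ := fun t =>
    frobNorm (Δ + (Mblk A C Q B1 D B2 R γ P - Mblk A C Q B1 D B2 R γ (g t))) with hf
  have hfc : Continuous f := by
    apply continuous_frobNorm.comp
    apply continuous_const.add
    apply continuous_const.sub
    exact (continuous_Mblk A C Q B1 D B2 R γ).comp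
      (continuous_const.add (continuous_id.smul continuous_const))
  have hf1 : f 1 = frobNorm Δ := by simp [hf, hg1]
  have h1 : ContinuousAt f 1 := hfc.continuousAt
  rw [Metric.continuousAt_iff] at h1
  obtain ⟨ε, hεpos, hε⟩ := h1 (d / 2) (by linarith)
  set t : ℝ := 1 - min ε 1 / 2 with ht
  have htmem : dist t 1 < ε := by
    rw [Real.dist_eq, ht]
    have h01 : (0:ℝ) < min ε 1 := lt_min hεpos one_pos
    have : |1 - min ε 1 / 2 - 1| = min ε 1 / 2 := by
      rw [show (1:ℝ) - min ε 1 / 2 - 1 = -(min ε 1 / 2) by ring, abs_neg,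
        abs_of_pos (by linarith)]
    rw [this]
    have := min_le_left ε (1:ℝ)
    linarith
  have ht0 : 0 ≤ t := by
    have := min_le_right ε (1:ℝ)
    rw [ht]; linarith
  have ht1 : t < 1 := by
    have h01 : (0:ℝ) < min ε 1 := lt_min hεpos one_pos
    rw [ht]; linarith
  have hft : f t ≤ d := by
    have := hε htmem
    rw [Real.dist_eq, hf1] at this
    have habs := abs_lt.1 this
    linarith [habs.1, habs.2]
  -- the interior point
  set P' : Matrix (Fin n) (Fin n) ℝ := g t with hP'
  have hP'sym : P'.IsSymm := hPstarSym.add ((hPsym.sub hPstarSym).smul t)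
  have hP'sub : P' - Pstar = t • (P - Pstar) := by
    simp [hP', hg]
  have hP'ball : frobNorm (P' - Pstar) < δ₀ := by
    rw [hP'sub, frobNorm_smul, abs_of_nonneg ht0]
    rcases (frobNorm_nonneg (P - Pstar)).eq_or_lt with hx | hx
    · rw [← hx, mul_zero]; exact hδ₀pos
    · calc t * frobNorm (P - Pstar) < 1 * frobNorm (P - Pstar) :=
          mul_lt_mul_of_pos_right ht1 hx
        _ ≤ δ₀ := by rw [one_mul]; exact hPball
  set Δ' := Δ + (Mblk A C Q B1 D B2 R γ P - Mblk A C Q B1 D B2 R γ P') with hΔ'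
  have hΔ'sym : Δ'.IsSymm :=
    hΔsym.add ((Mblk_isSymm A C Q B1 D B2 R γ hQ hR hPsym).sub
      (Mblk_isSymm A C Q B1 D B2 R γ hQ hR hP'sym))
  have hΔ'norm : frobNorm Δ' ≤ d := hft
  obtain ⟨hu, hs⟩ := hd P' hP'sym hP'ball Δ' hΔ'sym hΔ'norm
  have hsum : Mblk A C Q B1 D B2 R γ P' + Δ' = Mblk A C Q B1 D B2 R γ P + Δ := by
    rw [hΔ']; abel
  rw [hsum] at hu hs
  exact ⟨hu, hs⟩
end GoodSet
end EvalAux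
namespace EvalAux

attribute [local instance] Matrix.normedAddCommGroup Matrix.normedSpace

section Bounds

variable {n m1 m2 : ℕ}
variable (A C Q : Matrix (Fin n) (Fin n) ℝ) (B1 D : Matrix (Fin n) (Fin m1) ℝ)
  (B2 : Matrix (Fin n) (Fin m2) ℝ) (R : Matrix (Fin m1) (Fin m1) ℝ) (γ : ℝ)
  (Lv : Matrix (Fin m2) (Fin n) ℝ)

lemma Lh_sub (P : Matrix (Fin n) (Fin n) ℝ)
    (Δ : Matrix (Fin n ⊕ Fin m1 ⊕ Fin m2) (Fin n ⊕ Fin m1 ⊕ Fin m2) ℝ)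
    (hS : IsUnit (Smat R D P).det) (hSuu : IsUnit (SUf A C Q B1 D B2 R γ P Δ).det) :
    Lh A C Q B1 D B2 R γ P Δ - Lh A C Q B1 D B2 R γ P 0
      = -((SUf A C Q B1 D B2 R γ P Δ)⁻¹ * blkUX Δ)
        - (SUf A C Q B1 D B2 R γ P Δ)⁻¹ * blkUU Δ * Lh A C Q B1 D B2 R γ P 0 := by
  have hSue : SUf A C Q B1 D B2 R γ P Δ = Smat R D P + blkUU Δ := SUf_eq A C Q B1 D B2 R γ P Δ
  have hL0 : Lh A C Q B1 D B2 R γ P 0 = -((Smat R D P)⁻¹ * Nmat C B1 D P) := by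
    unfold Lh; rw [SUf_zero, UXf_zero]
  have hLΔ : Lh A C Q B1 D B2 R γ P Δ
      = -((SUf A C Q B1 D B2 R γ P Δ)⁻¹ * (Nmat C B1 D P + blkUX Δ)) := by
    unfold Lh; rw [UXf_eq]
  set S := Smat R D P
  set N := Nmat C B1 D P
  set Su := SUf A C Q B1 D B2 R γ P Δ
  have hcan : ∀ U V : Matrix (Fin m1) (Fin n) ℝ, Su * U = Su * V → U = V := by
    intro U V h
    have h2 := congrArg (fun M => Su⁻¹ * M) h
    simpa [← Matrix.mul_assoc, Matrix.nonsing_inv_mul _ hSuu] using h2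
  apply hcan
  rw [hLΔ, hL0]
  rw [Matrix.mul_sub, Matrix.mul_sub, Matrix.mul_neg, Matrix.mul_neg, Matrix.mul_neg,
    ← Matrix.mul_assoc Su (Su⁻¹) _, Matrix.mul_nonsing_inv _ hSuu, Matrix.one_mul,
    ← Matrix.mul_assoc Su (Su⁻¹) _, Matrix.mul_nonsing_inv _ hSuu, Matrix.one_mul,
    ← Matrix.mul_assoc Su (Su⁻¹ * blkUU Δ) _, ← Matrix.mul_assoc Su (Su⁻¹) _,
    Matrix.mul_nonsing_inv _ hSuu, Matrix.one_mul]
  rw [Matrix.mul_neg, hSue, Matrix.add_mul, ← Matrix.mul_assoc S (S⁻¹) _,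
    Matrix.mul_nonsing_inv _ hS, Matrix.one_mul]
  abel

lemma rhs2_eq (hR : R.IsSymm) {P : Matrix (Fin n) (Fin n) ℝ} (hP : P.IsSymm) :
    (Nmat C B1 D P)ᵀ * (Smat R D P)⁻¹ * R * (Smat R D P)⁻¹ * Nmat C B1 D P
      = (Kgain C B1 D R P)ᵀ * R * Kgain C B1 D R P := by
  have hSsym : (Smat R D P)ᵀ = Smat R D P := by
    unfold Smat
    rw [Matrix.transpose_add, hR.eq, Matrix.transpose_mul, Matrix.transpose_mul,
      Matrix.transpose_transpose, hP.eq, Matrix.mul_assoc]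
  unfold Kgain
  rw [Matrix.transpose_neg, Matrix.transpose_mul, Matrix.transpose_nonsing_inv, hSsym]
  simp only [Matrix.neg_mul, Matrix.mul_neg, neg_neg, Matrix.mul_assoc]

lemma continuous_blkUU : Continuous fun M :
    Matrix (Fin n ⊕ Fin m1 ⊕ Fin m2) (Fin n ⊕ Fin m1 ⊕ Fin m2) ℝ => blkUU M :=
  continuous_matrix fun i j => (continuous_id).matrix_elem _ _

lemma continuous_blkUX : Continuous fun M :
    Matrix (Fin n ⊕ Fin m1 ⊕ Fin m2) (Fin n ⊕ Fin m1 ⊕ Fin m2) ℝ => blkUX M :=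
  continuous_matrix fun i j => (continuous_id).matrix_elem _ _

lemma continuousOn_matrix_inv {X : Type*} [TopologicalSpace X] {I : Type*} [Fintype I]
    [DecidableEq I] {f : X → Matrix I I ℝ} {s : Set X} (hf : ContinuousOn f s)
    (hdet : ∀ x ∈ s, IsUnit (f x).det) : ContinuousOn (fun x => (f x)⁻¹) s := by
  have heq : (fun x => (f x)⁻¹) = fun x => ((f x).det)⁻¹ • (f x).adjugate := by
    funext x
    rw [Matrix.inv_def, Ring.inverse_eq_inv']
  rw [heq]
  exact (((continuous_id.matrix_det).comp_continuousOn hf).inv₀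
      fun x hx => (hdet x hx).ne_zero).smul
    ((continuous_id.matrix_adjugate).comp_continuousOn hf)

lemma stab_isUnit_kron {L : Matrix (Fin m1) (Fin n) ℝ}
    (hs : Stabilizing A C B1 D B2 L Lv) :
    IsUnit (kronMat (A + B2 * Lv + B1 * L) (C + D * L)).det := by
  have h := isUnit_kronMat_det (X := A + B1 * L + B2 * Lv) (Z := C + D * L) hs
  rwa [show A + B1 * L + B2 * Lv = A + B2 * Lv + B1 * L from by abel] at h

lemma continuous_kron : Continuous fun q :
    (Matrix (Fin n) (Fin n) ℝ) × (Matrix (Fin n) (Fin n) ℝ) => kronMat q.1 q.2 := by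
  unfold kronMat
  apply continuous_matrix
  intro i j
  simp only [Matrix.add_apply, Matrix.kroneckerMap_apply, Matrix.transpose_apply,
    Matrix.one_apply]
  exact ((continuous_const.mul (continuous_fst.matrix_elem _ _)).add
    ((continuous_fst.matrix_elem _ _).mul continuous_const)).add
    ((continuous_snd.matrix_elem _ _).mul (continuous_snd.matrix_elem _ _))

lemma exists_bounds (Pstar : Matrix (Fin n) (Fin n) ℝ) (δ₀ d : ℝ)
    (hgs : ∀ P Δ, (P, Δ) ∈ Kset (m1 := m1) (m2 := m2) Pstar δ₀ d →
      IsUnit (SUf A C Q B1 D B2 R γ P Δ).det ∧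
        Stabilizing A C B1 D B2 (Lh A C Q B1 D B2 R γ P Δ) Lv) :
    ∃ B : ℝ, 1 ≤ B ∧ ∀ P Δ, (P, Δ) ∈ Kset (m1 := m1) (m2 := m2) Pstar δ₀ d →
      ‖(SUf A C Q B1 D B2 R γ P Δ)⁻¹‖ ≤ B ∧
      ‖(kronMat (A + B2 * Lv + B1 * Lh A C Q B1 D B2 R γ P Δ)
          (C + D * Lh A C Q B1 D B2 R γ P Δ))⁻¹‖ ≤ B ∧
      ‖Lh A C Q B1 D B2 R γ P Δ‖ ≤ B := by
  set K := Kset (m1 := m1) (m2 := m2) Pstar δ₀ d with hK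
  have hSUc : Continuous fun p : Matrix (Fin n) (Fin n) ℝ
      × Matrix (Fin n ⊕ Fin m1 ⊕ Fin m2) (Fin n ⊕ Fin m1 ⊕ Fin m2) ℝ =>
      SUf A C Q B1 D B2 R γ p.1 p.2 := by
    unfold SUf
    exact continuous_blkUU.comp
      ((((continuous_Mblk A C Q B1 D B2 R γ).comp continuous_fst)).add continuous_snd)
  have hUXc : Continuous fun p : Matrix (Fin n) (Fin n) ℝ
      × Matrix (Fin n ⊕ Fin m1 ⊕ Fin m2) (Fin n ⊕ Fin m1 ⊕ Fin m2) ℝ =>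
      UXf A C Q B1 D B2 R γ p.1 p.2 := by
    unfold UXf
    exact continuous_blkUX.comp
      ((((continuous_Mblk A C Q B1 D B2 R γ).comp continuous_fst)).add continuous_snd)
  have hSUinv : ContinuousOn (fun p : Matrix (Fin n) (Fin n) ℝ
      × Matrix (Fin n ⊕ Fin m1 ⊕ Fin m2) (Fin n ⊕ Fin m1 ⊕ Fin m2) ℝ =>
      (SUf A C Q B1 D B2 R γ p.1 p.2)⁻¹) K :=
    continuousOn_matrix_inv hSUc.continuousOn fun p hp => (hgs p.1 p.2 hp).1
  have hLh : ContinuousOn (fun p : Matrix (Fin n) (Fin n) ℝ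
      × Matrix (Fin n ⊕ Fin m1 ⊕ Fin m2) (Fin n ⊕ Fin m1 ⊕ Fin m2) ℝ =>
      Lh A C Q B1 D B2 R γ p.1 p.2) K := by
    unfold Lh
    exact ((continuous_fst.matrix_mul continuous_snd).comp_continuousOn
      (hSUinv.prodMk hUXc.continuousOn)).neg
  have hXZ : Continuous fun L : Matrix (Fin m1) (Fin n) ℝ =>
      ((A + B2 * Lv + B1 * L), (C + D * L)) :=
    (continuous_const.add (continuous_const.matrix_mul continuous_id)).prodMk
      (continuous_const.add (continuous_const.matrix_mul continuous_id))
  have hKMc : ContinuousOn (fun p : Matrix (Fin n) (Fin n) ℝ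
      × Matrix (Fin n ⊕ Fin m1 ⊕ Fin m2) (Fin n ⊕ Fin m1 ⊕ Fin m2) ℝ =>
      kronMat (A + B2 * Lv + B1 * Lh A C Q B1 D B2 R γ p.1 p.2)
        (C + D * Lh A C Q B1 D B2 R γ p.1 p.2)) K :=
    (continuous_kron.comp hXZ).comp_continuousOn hLh
  have hKMinv : ContinuousOn (fun p : Matrix (Fin n) (Fin n) ℝ
      × Matrix (Fin n ⊕ Fin m1 ⊕ Fin m2) (Fin n ⊕ Fin m1 ⊕ Fin m2) ℝ =>
      (kronMat (A + B2 * Lv + B1 * Lh A C Q B1 D B2 R γ p.1 p.2)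
        (C + D * Lh A C Q B1 D B2 R γ p.1 p.2))⁻¹) K :=
    continuousOn_matrix_inv hKMc fun p hp =>
      stab_isUnit_kron A C B1 D B2 Lv (hgs p.1 p.2 hp).2
  have hG : ContinuousOn (fun p : Matrix (Fin n) (Fin n) ℝ
      × Matrix (Fin n ⊕ Fin m1 ⊕ Fin m2) (Fin n ⊕ Fin m1 ⊕ Fin m2) ℝ =>
      ‖(SUf A C Q B1 D B2 R γ p.1 p.2)⁻¹‖
        + ‖(kronMat (A + B2 * Lv + B1 * Lh A C Q B1 D B2 R γ p.1 p.2)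
            (C + D * Lh A C Q B1 D B2 R γ p.1 p.2))⁻¹‖
        + ‖Lh A C Q B1 D B2 R γ p.1 p.2‖) K :=
    (hSUinv.norm.add hKMinv.norm).add hLh.norm
  obtain ⟨B0, hB0⟩ := (isCompact_Kset Pstar δ₀ d).exists_bound_of_continuousOn hG
  refine ⟨max B0 1, le_max_right _ _, ?_⟩
  intro P Δ hp
  have h := hB0 (P, Δ) hp
  rw [Real.norm_eq_abs] at h
  have h2 := (le_abs_self _).trans h
  have n1 : (0:ℝ) ≤ ‖(SUf A C Q B1 D B2 R γ P Δ)⁻¹‖ := norm_nonneg _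
  have n2 : (0:ℝ) ≤ ‖(kronMat (A + B2 * Lv + B1 * Lh A C Q B1 D B2 R γ P Δ)
      (C + D * Lh A C Q B1 D B2 R γ P Δ))⁻¹‖ := norm_nonneg _
  have n3 : (0:ℝ) ≤ ‖Lh A C Q B1 D B2 R γ P Δ‖ := norm_nonneg _
  have hB0' := le_max_left B0 1
  refine ⟨by linarith, by linarith, by linarith⟩

end Bounds

end EvalAux
section MainTheorem

attribute [local instance] Matrix.normedAddCommGroup Matrix.normedSpace

open EvalAux

set_option maxHeartbeats 2000000

/-- Bound on the policy-evaluation error induced by the disturbance `ΔM`. -/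
theorem evaluation_error_bound (n m1 m2 : ℕ)
    (hn : 0 < n) (hm1 : 0 < m1) (hm2 : 0 < m2)
    (A C Q : Matrix (Fin n) (Fin n) ℝ) (B1 D : Matrix (Fin n) (Fin m1) ℝ)
    (B2 : Matrix (Fin n) (Fin m2) ℝ) (R : Matrix (Fin m1) (Fin m1) ℝ) (γ : ℝ)
    (hQ : Q.PosSemidef) (hR : R.PosDef) (hγ : 0 < γ)
    (Lv : Matrix (Fin m2) (Fin n) ℝ) (Pstar : Matrix (Fin n) (Fin n) ℝ)
    (hPstar : Pstar.IsSymm) (hSstar : IsUnit (Smat R D Pstar).det)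
    (hGARE : InnerGARE A C Q B1 D B2 R γ Lv Pstar)
    (hstab : Stabilizing A C B1 D B2 (Kgain C B1 D R Pstar) Lv)
    (δ₀ : ℝ) (hδ₀pos : 0 < δ₀)
    (hδ₀ : ∀ P : Matrix (Fin n) (Fin n) ℝ, P.IsSymm → frobNorm (P - Pstar) < δ₀ →
      IsUnit (Smat R D P).det ∧ Stabilizing A C B1 D B2 (Kgain C B1 D R P) Lv)
    (d : ℝ) (hdpos : 0 < d)
    (hd : ∀ Phat : Matrix (Fin n) (Fin n) ℝ, Phat.IsSymm → frobNorm (Phat - Pstar) < δ₀ →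
      ∀ ΔM : Matrix (Fin n ⊕ Fin m1 ⊕ Fin m2) (Fin n ⊕ Fin m1 ⊕ Fin m2) ℝ,
        ΔM.IsSymm → frobNorm ΔM ≤ d →
        IsUnit (blkUU (Mblk A C Q B1 D B2 R γ Phat + ΔM)).det ∧
        Stabilizing A C B1 D B2
          (-((blkUU (Mblk A C Q B1 D B2 R γ Phat + ΔM))⁻¹
              * blkUX (Mblk A C Q B1 D B2 R γ Phat + ΔM))) Lv) :
    ∃ c₃ > (0 : ℝ), ∀ c₂ > (0 : ℝ), ∃ δ : ℝ, 0 < δ ∧ δ ≤ d ∧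
      ∀ Phat : Matrix (Fin n) (Fin n) ℝ, Phat.IsSymm → frobNorm (Phat - Pstar) < δ₀ →
        ∀ ΔM : Matrix (Fin n ⊕ Fin m1 ⊕ Fin m2) (Fin n ⊕ Fin m1 ⊕ Fin m2) ℝ,
          ΔM.IsSymm → frobNorm ΔM < δ →
          ∀ Pi1 Pi2 : Matrix (Fin n) (Fin n) ℝ, Pi1.IsSymm → Pi2.IsSymm →
            lyapOp
              (A + B2 * Lv + B1 *
                (-((blkUU (Mblk A C Q B1 D B2 R γ Phat + ΔM))⁻¹
                    * blkUX (Mblk A C Q B1 D B2 R γ Phat + ΔM))))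
              (C + D *
                (-((blkUU (Mblk A C Q B1 D B2 R γ Phat + ΔM))⁻¹
                    * blkUX (Mblk A C Q B1 D B2 R γ Phat + ΔM)))) Pi1 =
              -(Q - (γ ^ 2) • (Lvᵀ * Lv))
                - (-((blkUU (Mblk A C Q B1 D B2 R γ Phat + ΔM))⁻¹
                      * blkUX (Mblk A C Q B1 D B2 R γ Phat + ΔM)))ᵀ * R *
                  (-((blkUU (Mblk A C Q B1 D B2 R γ Phat + ΔM))⁻¹
                      * blkUX (Mblk A C Q B1 D B2 R γ Phat + ΔM))) →
            lyapOp (A + B2 * Lv + B1 * Kgain C B1 D R Phat)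
                (C + D * Kgain C B1 D R Phat) Pi2 =
              -(Q - (γ ^ 2) • (Lvᵀ * Lv))
                - (Nmat C B1 D Phat)ᵀ * (Smat R D Phat)⁻¹ * R * (Smat R D Phat)⁻¹
                    * Nmat C B1 D Phat →
            frobNorm (Pi1 - Pi2) ≤ c₃ * frobNorm ΔM ∧ c₃ * frobNorm ΔM < c₂ := by
  classical
  have hQsym : Q.IsSymm := by
    have hq1 : Qᴴ = Q := hQ.1
    rwa [Matrix.conjTranspose_eq_transpose_of_trivial] at hq1
  have hRsym : R.IsSymm := by
    have hr1 : Rᴴ = R := hR.1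
    rwa [Matrix.conjTranspose_eq_transpose_of_trivial] at hr1
  have hgs : ∀ P Δ, (P, Δ) ∈ EvalAux.Kset (m1 := m1) (m2 := m2) Pstar δ₀ d →
      IsUnit (EvalAux.SUf A C Q B1 D B2 R γ P Δ).det ∧
        Stabilizing A C B1 D B2 (EvalAux.Lh A C Q B1 D B2 R γ P Δ) Lv :=
    fun P Δ hm => EvalAux.good_set A C Q B1 D B2 R γ Lv hQsym hRsym Pstar hPstar δ₀ d
      hδ₀pos hdpos hd hm
  obtain ⟨B, hB1, hB⟩ := EvalAux.exists_bounds A C Q B1 D B2 R γ Lv Pstar δ₀ d hgs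
  have hBpos : (0:ℝ) < B := lt_of_lt_of_le one_pos hB1
  -- constants
  set cZ : ℝ := ‖C‖ + (m1:ℝ) * ‖D‖ * B with hcZdef
  have hcZ0 : 0 ≤ cZ := by positivity
  set cr2 : ℝ := ‖Q - (γ^2) • (Lvᵀ * Lv)‖ + (m1:ℝ) * ((m1:ℝ) * B * ‖R‖) * B with hcr2def
  have hcr20 : 0 ≤ cr2 := by positivity
  set ν : ℝ := ((Fintype.card (Fin n × Fin n) : ℕ) : ℝ) with hνdef
  have hν0 : (0:ℝ) ≤ ν := by positivity
  set cP : ℝ := ν * B * cr2 with hcPdef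
  have hcP0 : 0 ≤ cP := by positivity
  set cL : ℝ := (m1:ℝ) * B + (m1:ℝ) * (m1:ℝ) * B * B with hcLdef
  have hcL0 : 0 ≤ cL := by positivity
  set cE : ℝ := (m1:ℝ) * ((m1:ℝ) * ‖R‖ * B) + (m1:ℝ) * B * ‖R‖ * (m1:ℝ)
      + (n:ℝ) * ((m1:ℝ) * ‖B1‖) * cP + (n:ℝ) * cP * ((m1:ℝ) * ‖B1‖)
      + (n:ℝ) * ((m1:ℝ) * ‖D‖) * ((n:ℝ) * cP * cZ)
      + (n:ℝ) * cZ * ((n:ℝ) * cP * ((m1:ℝ) * ‖D‖)) with hcEdef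
  have hcE0 : 0 ≤ cE := by positivity
  set c₃ : ℝ := (n:ℝ) * (n:ℝ) * (ν * B * (cE * cL)) + 1 with hc₃def
  have hc₃pos : (0:ℝ) < c₃ := by positivity
  refine ⟨c₃, hc₃pos, ?_⟩
  intro c₂ hc₂
  refine ⟨min (d/2) (c₂ / c₃), lt_min (by linarith) (by positivity), ?_, ?_⟩
  · exact (min_le_left _ _).trans (by linarith)
  intro Phat hPsym hPball ΔM hΔsym hΔball Pi1 Pi2 hPi1sym hPi2sym h1 h2
  have hΔd2 : frobNorm ΔM ≤ d / 2 :=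
    le_of_lt (lt_of_lt_of_le hΔball (min_le_left _ _))
  have hmem : (Phat, ΔM) ∈ EvalAux.Kset (m1 := m1) (m2 := m2) Pstar δ₀ d :=
    ⟨hPsym, le_of_lt hPball, hΔsym, hΔd2⟩
  have hfrob0 : frobNorm (0 : Matrix (Fin n ⊕ Fin m1 ⊕ Fin m2) (Fin n ⊕ Fin m1 ⊕ Fin m2) ℝ)
      = 0 := by simp [frobNorm]
  have hmem0 : (Phat, (0 : Matrix (Fin n ⊕ Fin m1 ⊕ Fin m2) (Fin n ⊕ Fin m1 ⊕ Fin m2) ℝ))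
      ∈ EvalAux.Kset (m1 := m1) (m2 := m2) Pstar δ₀ d :=
    ⟨hPsym, le_of_lt hPball, Matrix.isSymm_zero, by rw [hfrob0]; positivity⟩
  -- convert the two Lyapunov equations
  have e1 : lyapOp (A + B2 * Lv + B1 * EvalAux.Lh A C Q B1 D B2 R γ Phat ΔM)
      (C + D * EvalAux.Lh A C Q B1 D B2 R γ Phat ΔM) Pi1
      = -(Q - (γ ^ 2) • (Lvᵀ * Lv))
        - (EvalAux.Lh A C Q B1 D B2 R γ Phat ΔM)ᵀ * R
          * EvalAux.Lh A C Q B1 D B2 R γ Phat ΔM := h1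
  have e2 : lyapOp (A + B2 * Lv + B1 * EvalAux.Lh A C Q B1 D B2 R γ Phat 0)
      (C + D * EvalAux.Lh A C Q B1 D B2 R γ Phat 0) Pi2
      = -(Q - (γ ^ 2) • (Lvᵀ * Lv))
        - (EvalAux.Lh A C Q B1 D B2 R γ Phat 0)ᵀ * R
          * EvalAux.Lh A C Q B1 D B2 R γ Phat 0 := by
    rw [EvalAux.rhs2_eq C B1 D R hRsym hPsym] at h2
    rw [EvalAux.Lh_zero A C Q B1 D B2 R γ Phat]
    exact h2
  clear h1 h2
  -- invertibility facts
  obtain ⟨hSuudet, hstab1⟩ := hgs Phat ΔM hmem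
  obtain ⟨hS0det, hstab0⟩ := hgs Phat 0 hmem0
  have hSdet : IsUnit (Smat R D Phat).det := by
    rwa [EvalAux.SUf_zero A C Q B1 D B2 R γ Phat] at hS0det
  obtain ⟨hSuB, hKM1B, hL1B⟩ := hB Phat ΔM hmem
  obtain ⟨hS0B, hKM0B, hL0B⟩ := hB Phat 0 hmem0
  have hΔLeq := EvalAux.Lh_sub A C Q B1 D B2 R γ Phat ΔM hSdet hSuudet
  -- abbreviations
  set L₁ := EvalAux.Lh A C Q B1 D B2 R γ Phat ΔM with hL1d
  set L₀ := EvalAux.Lh A C Q B1 D B2 R γ Phat 0 with hL0d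
  have hKM1 : IsUnit (EvalAux.kronMat (A + B2 * Lv + B1 * L₁) (C + D * L₁)).det :=
    EvalAux.stab_isUnit_kron A C B1 D B2 Lv hstab1
  have hKM0 : IsUnit (EvalAux.kronMat (A + B2 * Lv + B1 * L₀) (C + D * L₀)).det :=
    EvalAux.stab_isUnit_kron A C B1 D B2 Lv hstab0
  set ΔL := L₁ - L₀ with hΔLdef
  -- gain difference bound
  have hΔMn : ‖ΔM‖ ≤ frobNorm ΔM := EvalAux.norm_le_frobNorm ΔM
  have hW0 : 0 ≤ frobNorm ΔM := EvalAux.frobNorm_nonneg ΔM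
  have hUXn : ‖blkUX ΔM‖ ≤ frobNorm ΔM := (EvalAux.norm_blkUX_le ΔM).trans hΔMn
  have hUUn : ‖blkUU ΔM‖ ≤ frobNorm ΔM := (EvalAux.norm_blkUU_le ΔM).trans hΔMn
  have hΔLn : ‖ΔL‖ ≤ cL * frobNorm ΔM := by
    rw [hΔLeq]
    have ht1 : ‖(EvalAux.SUf A C Q B1 D B2 R γ Phat ΔM)⁻¹ * blkUX ΔM‖
        ≤ (m1:ℝ) * B * frobNorm ΔM := by
      refine (EvalAux.norm_mul_fin _ _).trans ?_
      gcongr <;> first | exact hSuB | exact hUXn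
    have ht2a : ‖(EvalAux.SUf A C Q B1 D B2 R γ Phat ΔM)⁻¹ * blkUU ΔM‖
        ≤ (m1:ℝ) * B * frobNorm ΔM := by
      refine (EvalAux.norm_mul_fin _ _).trans ?_
      gcongr <;> first | exact hSuB | exact hUUn
    have ht2 : ‖(EvalAux.SUf A C Q B1 D B2 R γ Phat ΔM)⁻¹ * blkUU ΔM * L₀‖
        ≤ (m1:ℝ) * ((m1:ℝ) * B * frobNorm ΔM) * B := by
      refine (EvalAux.norm_mul_fin _ _).trans ?_
      gcongr <;> first | exact ht2a | exact hL0B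
    calc ‖-((EvalAux.SUf A C Q B1 D B2 R γ Phat ΔM)⁻¹ * blkUX ΔM)
          - (EvalAux.SUf A C Q B1 D B2 R γ Phat ΔM)⁻¹ * blkUU ΔM * L₀‖
        ≤ ‖-((EvalAux.SUf A C Q B1 D B2 R γ Phat ΔM)⁻¹ * blkUX ΔM)‖
          + ‖(EvalAux.SUf A C Q B1 D B2 R γ Phat ΔM)⁻¹ * blkUU ΔM * L₀‖ :=
          norm_sub_le _ _
      _ ≤ (m1:ℝ) * B * frobNorm ΔM + (m1:ℝ) * ((m1:ℝ) * B * frobNorm ΔM) * B := by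
          rw [norm_neg]
          exact add_le_add ht1 ht2
      _ = cL * frobNorm ΔM := by rw [hcLdef]; ring
  -- bound on Pi2
  have hRL0 : ‖L₀ᵀ * R * L₀‖ ≤ (m1:ℝ) * ((m1:ℝ) * B * ‖R‖) * B := by
    have hra : ‖L₀ᵀ * R‖ ≤ (m1:ℝ) * B * ‖R‖ := by
      refine (EvalAux.norm_mul_fin _ _).trans ?_
      rw [Matrix.norm_transpose]
      gcongr <;> exact hL0B
    refine (EvalAux.norm_mul_fin _ _).trans ?_
    gcongr <;> first | exact hra | exact hL0B
  have hr2n : ‖-(Q - (γ ^ 2) • (Lvᵀ * Lv)) - L₀ᵀ * R * L₀‖ ≤ cr2 := by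
    calc ‖-(Q - (γ ^ 2) • (Lvᵀ * Lv)) - L₀ᵀ * R * L₀‖
        ≤ ‖-(Q - (γ ^ 2) • (Lvᵀ * Lv))‖ + ‖L₀ᵀ * R * L₀‖ := norm_sub_le _ _
      _ ≤ ‖Q - (γ ^ 2) • (Lvᵀ * Lv)‖ + (m1:ℝ) * ((m1:ℝ) * B * ‖R‖) * B := by
          rw [norm_neg]
          exact add_le_add le_rfl hRL0
      _ = cr2 := by rw [hcr2def]
  have hvec2 : EvalAux.vecM Pi2
      = (EvalAux.kronMat (A + B2 * Lv + B1 * L₀) (C + D * L₀))⁻¹ *ᵥ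
        EvalAux.vecM (-(Q - (γ ^ 2) • (Lvᵀ * Lv)) - L₀ᵀ * R * L₀) :=
    EvalAux.vec_sol hKM0 e2
  have hPi2n : ‖Pi2‖ ≤ cP := by
    calc ‖Pi2‖ = ‖EvalAux.vecM Pi2‖ := (EvalAux.norm_vecM _).symm
      _ = ‖(EvalAux.kronMat (A + B2 * Lv + B1 * L₀) (C + D * L₀))⁻¹ *ᵥ
            EvalAux.vecM (-(Q - (γ ^ 2) • (Lvᵀ * Lv)) - L₀ᵀ * R * L₀)‖ := by rw [hvec2]
      _ ≤ ((Fintype.card (Fin n × Fin n) : ℕ) : ℝ)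
            * ‖(EvalAux.kronMat (A + B2 * Lv + B1 * L₀) (C + D * L₀))⁻¹‖
            * ‖EvalAux.vecM (-(Q - (γ ^ 2) • (Lvᵀ * Lv)) - L₀ᵀ * R * L₀)‖ :=
          EvalAux.norm_mulVec_le _ _
      _ ≤ ν * B * cr2 := by
          rw [hνdef, EvalAux.norm_vecM]
          gcongr <;> first | exact hKM0B | exact hr2n
      _ = cP := by rw [hcPdef]
  -- norm bounds for the closed-loop matrices
  have hDL1 : ‖D * L₁‖ ≤ (m1:ℝ) * ‖D‖ * B := by
    refine (EvalAux.norm_mul_fin _ _).trans ?_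
    gcongr <;> exact hL1B
  have hDL0 : ‖D * L₀‖ ≤ (m1:ℝ) * ‖D‖ * B := by
    refine (EvalAux.norm_mul_fin _ _).trans ?_
    gcongr <;> exact hL0B
  have hZ1n : ‖C + D * L₁‖ ≤ cZ := by
    rw [hcZdef]
    exact (norm_add_le _ _).trans (add_le_add le_rfl hDL1)
  have hZ0n : ‖C + D * L₀‖ ≤ cZ := by
    rw [hcZdef]
    exact (norm_add_le _ _).trans (add_le_add le_rfl hDL0)
  -- the error identity
  have hEeq : lyapOp (A + B2 * Lv + B1 * L₁) (C + D * L₁) (Pi1 - Pi2)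
      = -(ΔLᵀ * (R * L₁)) - L₀ᵀ * (R * ΔL) - (B1 * ΔL)ᵀ * Pi2 - Pi2 * (B1 * ΔL)
        - (D * ΔL)ᵀ * (Pi2 * (C + D * L₁)) - (C + D * L₀)ᵀ * (Pi2 * (D * ΔL)) := by
    have hXd : A + B2 * Lv + B1 * L₁ = (A + B2 * Lv + B1 * L₀) + B1 * ΔL := by
      rw [hΔLdef, Matrix.mul_sub]; abel
    have hZd : C + D * L₁ = (C + D * L₀) + D * ΔL := by
      rw [hΔLdef, Matrix.mul_sub]; abel
    have hL1e : L₁ = L₀ + ΔL := by rw [hΔLdef]; abel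
    have step1 : lyapOp (A + B2 * Lv + B1 * L₁) (C + D * L₁) (Pi1 - Pi2)
        = lyapOp (A + B2 * Lv + B1 * L₁) (C + D * L₁) Pi1
          - lyapOp (A + B2 * Lv + B1 * L₀) (C + D * L₀) Pi2
          - ((B1 * ΔL)ᵀ * Pi2 + Pi2 * (B1 * ΔL) + (D * ΔL)ᵀ * (Pi2 * (C + D * L₁))
            + (C + D * L₀)ᵀ * (Pi2 * (D * ΔL))) := by
      rw [hXd, hZd]
      unfold lyapOp
      simp only [Matrix.transpose_add, Matrix.add_mul, Matrix.mul_add, Matrix.mul_sub,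
        Matrix.sub_mul, Matrix.transpose_sub, Matrix.mul_assoc]
      abel
    rw [step1, e1, e2, hL1e]
    simp only [Matrix.transpose_add, Matrix.add_mul, Matrix.mul_add, Matrix.mul_assoc]
    abel
  -- bounds on the six error terms
  have hRL1' : ‖R * L₁‖ ≤ (m1:ℝ) * ‖R‖ * B := by
    refine (EvalAux.norm_mul_fin _ _).trans ?_
    gcongr <;> exact hL1B
  have hRΔL : ‖R * ΔL‖ ≤ (m1:ℝ) * ‖R‖ * ‖ΔL‖ := EvalAux.norm_mul_fin _ _
  have hB1ΔL : ‖B1 * ΔL‖ ≤ (m1:ℝ) * ‖B1‖ * ‖ΔL‖ := EvalAux.norm_mul_fin _ _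
  have hDΔL : ‖D * ΔL‖ ≤ (m1:ℝ) * ‖D‖ * ‖ΔL‖ := EvalAux.norm_mul_fin _ _
  have hT1 : ‖ΔLᵀ * (R * L₁)‖ ≤ (m1:ℝ) * ((m1:ℝ) * ‖R‖ * B) * ‖ΔL‖ := by
    have h := EvalAux.norm_mul_fin ΔLᵀ (R * L₁)
    rw [Matrix.norm_transpose] at h
    refine h.trans ?_
    calc (m1:ℝ) * ‖ΔL‖ * ‖R * L₁‖ ≤ (m1:ℝ) * ‖ΔL‖ * ((m1:ℝ) * ‖R‖ * B) := by
          gcongr <;> exact hRL1'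
      _ = (m1:ℝ) * ((m1:ℝ) * ‖R‖ * B) * ‖ΔL‖ := by ring
  have hT2 : ‖L₀ᵀ * (R * ΔL)‖ ≤ (m1:ℝ) * B * ‖R‖ * (m1:ℝ) * ‖ΔL‖ := by
    have h := EvalAux.norm_mul_fin L₀ᵀ (R * ΔL)
    rw [Matrix.norm_transpose] at h
    refine h.trans ?_
    calc (m1:ℝ) * ‖L₀‖ * ‖R * ΔL‖ ≤ (m1:ℝ) * B * ((m1:ℝ) * ‖R‖ * ‖ΔL‖) := by
          gcongr <;> first | exact hL0B | exact hRΔL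
      _ = (m1:ℝ) * B * ‖R‖ * (m1:ℝ) * ‖ΔL‖ := by ring
  have hT3 : ‖(B1 * ΔL)ᵀ * Pi2‖ ≤ (n:ℝ) * ((m1:ℝ) * ‖B1‖) * cP * ‖ΔL‖ := by
    have h := EvalAux.norm_mul_fin (B1 * ΔL)ᵀ Pi2
    rw [Matrix.norm_transpose] at h
    refine h.trans ?_
    calc (n:ℝ) * ‖B1 * ΔL‖ * ‖Pi2‖ ≤ (n:ℝ) * ((m1:ℝ) * ‖B1‖ * ‖ΔL‖) * cP := by
          gcongr <;> first | exact hB1ΔL | exact hPi2n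
      _ = (n:ℝ) * ((m1:ℝ) * ‖B1‖) * cP * ‖ΔL‖ := by ring
  have hT4 : ‖Pi2 * (B1 * ΔL)‖ ≤ (n:ℝ) * cP * ((m1:ℝ) * ‖B1‖) * ‖ΔL‖ := by
    refine (EvalAux.norm_mul_fin _ _).trans ?_
    calc (n:ℝ) * ‖Pi2‖ * ‖B1 * ΔL‖ ≤ (n:ℝ) * cP * ((m1:ℝ) * ‖B1‖ * ‖ΔL‖) := by
          gcongr <;> first | exact hPi2n | exact hB1ΔL
      _ = (n:ℝ) * cP * ((m1:ℝ) * ‖B1‖) * ‖ΔL‖ := by ring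
  have hPZ1 : ‖Pi2 * (C + D * L₁)‖ ≤ (n:ℝ) * cP * cZ := by
    refine (EvalAux.norm_mul_fin _ _).trans ?_
    gcongr <;> first | exact hPi2n | exact hZ1n
  have hPDΔL : ‖Pi2 * (D * ΔL)‖ ≤ (n:ℝ) * cP * ((m1:ℝ) * ‖D‖ * ‖ΔL‖) := by
    refine (EvalAux.norm_mul_fin _ _).trans ?_
    gcongr <;> first | exact hPi2n | exact hDΔL
  have hT5 : ‖(D * ΔL)ᵀ * (Pi2 * (C + D * L₁))‖
      ≤ (n:ℝ) * ((m1:ℝ) * ‖D‖) * ((n:ℝ) * cP * cZ) * ‖ΔL‖ := by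
    have h := EvalAux.norm_mul_fin (D * ΔL)ᵀ (Pi2 * (C + D * L₁))
    rw [Matrix.norm_transpose] at h
    refine h.trans ?_
    calc (n:ℝ) * ‖D * ΔL‖ * ‖Pi2 * (C + D * L₁)‖
        ≤ (n:ℝ) * ((m1:ℝ) * ‖D‖ * ‖ΔL‖) * ((n:ℝ) * cP * cZ) := by
          gcongr <;> first | exact hDΔL | exact hPZ1
      _ = (n:ℝ) * ((m1:ℝ) * ‖D‖) * ((n:ℝ) * cP * cZ) * ‖ΔL‖ := by ring
  have hT6 : ‖(C + D * L₀)ᵀ * (Pi2 * (D * ΔL))‖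
      ≤ (n:ℝ) * cZ * ((n:ℝ) * cP * ((m1:ℝ) * ‖D‖)) * ‖ΔL‖ := by
    have h := EvalAux.norm_mul_fin (C + D * L₀)ᵀ (Pi2 * (D * ΔL))
    rw [Matrix.norm_transpose] at h
    refine h.trans ?_
    calc (n:ℝ) * ‖C + D * L₀‖ * ‖Pi2 * (D * ΔL)‖
        ≤ (n:ℝ) * cZ * ((n:ℝ) * cP * ((m1:ℝ) * ‖D‖ * ‖ΔL‖)) := by
          gcongr <;> first | exact hZ0n | exact hPDΔL
      _ = (n:ℝ) * cZ * ((n:ℝ) * cP * ((m1:ℝ) * ‖D‖)) * ‖ΔL‖ := by ring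
  have hEn : ‖-(ΔLᵀ * (R * L₁)) - L₀ᵀ * (R * ΔL) - (B1 * ΔL)ᵀ * Pi2 - Pi2 * (B1 * ΔL)
      - (D * ΔL)ᵀ * (Pi2 * (C + D * L₁)) - (C + D * L₀)ᵀ * (Pi2 * (D * ΔL))‖
      ≤ cE * ‖ΔL‖ := by
    have hs1 := norm_sub_le (-(ΔLᵀ * (R * L₁)) - L₀ᵀ * (R * ΔL) - (B1 * ΔL)ᵀ * Pi2
      - Pi2 * (B1 * ΔL) - (D * ΔL)ᵀ * (Pi2 * (C + D * L₁)))
      ((C + D * L₀)ᵀ * (Pi2 * (D * ΔL)))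
    have hs2 := norm_sub_le (-(ΔLᵀ * (R * L₁)) - L₀ᵀ * (R * ΔL) - (B1 * ΔL)ᵀ * Pi2
      - Pi2 * (B1 * ΔL)) ((D * ΔL)ᵀ * (Pi2 * (C + D * L₁)))
    have hs3 := norm_sub_le (-(ΔLᵀ * (R * L₁)) - L₀ᵀ * (R * ΔL) - (B1 * ΔL)ᵀ * Pi2)
      (Pi2 * (B1 * ΔL))
    have hs4 := norm_sub_le (-(ΔLᵀ * (R * L₁)) - L₀ᵀ * (R * ΔL)) ((B1 * ΔL)ᵀ * Pi2)
    have hs5 := norm_sub_le (-(ΔLᵀ * (R * L₁))) (L₀ᵀ * (R * ΔL))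
    rw [norm_neg] at hs5
    have hfin : ‖-(ΔLᵀ * (R * L₁)) - L₀ᵀ * (R * ΔL) - (B1 * ΔL)ᵀ * Pi2 - Pi2 * (B1 * ΔL)
        - (D * ΔL)ᵀ * (Pi2 * (C + D * L₁)) - (C + D * L₀)ᵀ * (Pi2 * (D * ΔL))‖
        ≤ ‖ΔLᵀ * (R * L₁)‖ + ‖L₀ᵀ * (R * ΔL)‖ + ‖(B1 * ΔL)ᵀ * Pi2‖ + ‖Pi2 * (B1 * ΔL)‖
          + ‖(D * ΔL)ᵀ * (Pi2 * (C + D * L₁))‖ + ‖(C + D * L₀)ᵀ * (Pi2 * (D * ΔL))‖ := by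
      linarith
    refine hfin.trans ?_
    calc ‖ΔLᵀ * (R * L₁)‖ + ‖L₀ᵀ * (R * ΔL)‖ + ‖(B1 * ΔL)ᵀ * Pi2‖ + ‖Pi2 * (B1 * ΔL)‖
          + ‖(D * ΔL)ᵀ * (Pi2 * (C + D * L₁))‖ + ‖(C + D * L₀)ᵀ * (Pi2 * (D * ΔL))‖
        ≤ (m1:ℝ) * ((m1:ℝ) * ‖R‖ * B) * ‖ΔL‖ + (m1:ℝ) * B * ‖R‖ * (m1:ℝ) * ‖ΔL‖
          + (n:ℝ) * ((m1:ℝ) * ‖B1‖) * cP * ‖ΔL‖ + (n:ℝ) * cP * ((m1:ℝ) * ‖B1‖) * ‖ΔL‖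
          + (n:ℝ) * ((m1:ℝ) * ‖D‖) * ((n:ℝ) * cP * cZ) * ‖ΔL‖
          + (n:ℝ) * cZ * ((n:ℝ) * cP * ((m1:ℝ) * ‖D‖)) * ‖ΔL‖ := by
          linarith
      _ = cE * ‖ΔL‖ := by rw [hcEdef]; ring
  -- conclude
  have hvec1 : EvalAux.vecM (Pi1 - Pi2)
      = (EvalAux.kronMat (A + B2 * Lv + B1 * L₁) (C + D * L₁))⁻¹ *ᵥ
        EvalAux.vecM (-(ΔLᵀ * (R * L₁)) - L₀ᵀ * (R * ΔL) - (B1 * ΔL)ᵀ * Pi2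
          - Pi2 * (B1 * ΔL) - (D * ΔL)ᵀ * (Pi2 * (C + D * L₁))
          - (C + D * L₀)ᵀ * (Pi2 * (D * ΔL))) :=
    EvalAux.vec_sol hKM1 hEeq
  have hnm : ‖Pi1 - Pi2‖ ≤ ν * B * (cE * (cL * frobNorm ΔM)) := by
    have hEfull : ‖-(ΔLᵀ * (R * L₁)) - L₀ᵀ * (R * ΔL) - (B1 * ΔL)ᵀ * Pi2
        - Pi2 * (B1 * ΔL) - (D * ΔL)ᵀ * (Pi2 * (C + D * L₁))
        - (C + D * L₀)ᵀ * (Pi2 * (D * ΔL))‖ ≤ cE * (cL * frobNorm ΔM) := by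
      refine hEn.trans ?_
      gcongr
    calc ‖Pi1 - Pi2‖ = ‖EvalAux.vecM (Pi1 - Pi2)‖ := (EvalAux.norm_vecM _).symm
      _ = ‖(EvalAux.kronMat (A + B2 * Lv + B1 * L₁) (C + D * L₁))⁻¹ *ᵥ
            EvalAux.vecM (-(ΔLᵀ * (R * L₁)) - L₀ᵀ * (R * ΔL) - (B1 * ΔL)ᵀ * Pi2
              - Pi2 * (B1 * ΔL) - (D * ΔL)ᵀ * (Pi2 * (C + D * L₁))
              - (C + D * L₀)ᵀ * (Pi2 * (D * ΔL)))‖ := by rw [hvec1]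
      _ ≤ ((Fintype.card (Fin n × Fin n) : ℕ) : ℝ)
            * ‖(EvalAux.kronMat (A + B2 * Lv + B1 * L₁) (C + D * L₁))⁻¹‖
            * ‖EvalAux.vecM (-(ΔLᵀ * (R * L₁)) - L₀ᵀ * (R * ΔL) - (B1 * ΔL)ᵀ * Pi2
              - Pi2 * (B1 * ΔL) - (D * ΔL)ᵀ * (Pi2 * (C + D * L₁))
              - (C + D * L₀)ᵀ * (Pi2 * (D * ΔL)))‖ := EvalAux.norm_mulVec_le _ _
      _ ≤ ν * B * (cE * (cL * frobNorm ΔM)) := by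
          rw [← hνdef, EvalAux.norm_vecM]
          gcongr <;> first | exact hKM1B | exact hEfull
  constructor
  · calc frobNorm (Pi1 - Pi2)
        ≤ _ := EvalAux.frobNorm_le_card_norm (Pi1 - Pi2)
      _ ≤ (n:ℝ) * (n:ℝ) * (ν * B * (cE * (cL * frobNorm ΔM))) := by
          simp only [Fintype.card_fin]
          gcongr
      _ = ((n:ℝ) * (n:ℝ) * (ν * B * (cE * cL))) * frobNorm ΔM := by ring
      _ ≤ c₃ * frobNorm ΔM := by
          apply mul_le_mul_of_nonneg_right _ hW0
          rw [hc₃def]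
          linarith
  · have hWlt : frobNorm ΔM < c₂ / c₃ := lt_of_lt_of_le hΔball (min_le_right _ _)
    calc c₃ * frobNorm ΔM < c₃ * (c₂ / c₃) := mul_lt_mul_of_pos_left hWlt hc₃pos
      _ = c₂ := by field_simp

end MainTheorem

end
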